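/- Let n ≥ 3 and let Ω ⊆ ℝⁿ be a convex domain (nonempty, open, convex). Then every conformal harmonic map ℂ → Ω is constant if and only if Ω does not contain any affine 2-plane (i.e., there are no p ∈ ℝⁿ and linearly independent u, v ∈ ℝⁿ with p + span{u,v} ⊆ Ω). -/

import Mathlib

open RealInnerProductSpace

/-- A map `f : ℂ → ℝⁿ` is conformal harmonic if it is `C²`, its partial derivatives
`f_x = Df·1` and `f_y = Df·i` satisfy `f_x · f_y = 0` and `|f_x| = |f_y|` at every
point (conformality), and `f_xx + f_yy = 0` (harmonicity). -/
def ConformalHarmonic {n : ℕ} (f : ℂ → EuclideanSpace ℝ (Fin n)) : Prop :=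
  ContDiff ℝ 2 f ∧
  (∀ z : ℂ, ⟪fderiv ℝ f z 1, fderiv ℝ f z Complex.I⟫ = 0 ∧
      ‖fderiv ℝ f z 1‖ = ‖fderiv ℝ f z Complex.I‖) ∧
  (∀ z : ℂ, fderiv ℝ (fun w => fderiv ℝ f w 1) z 1
      + fderiv ℝ (fun w => fderiv ℝ f w Complex.I) z Complex.I = 0)

section AuxLemmas

open Complex intervalIntegral Metric Set Bornology


lemma exists_primitive {g : ℂ → ℂ} (hg : Differentiable ℂ g) :
    ∃ G : ℂ → ℂ, ∀ z, HasDerivAt G (g z) z := by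
  have hgc : Continuous g := hg.continuous
  have hganal : AnalyticOnNhd ℂ g Set.univ := fun z _ => hg.analyticAt z
  have hg' : Continuous (deriv g) := by
    have := hganal.deriv
    exact continuous_iff_continuousAt.2 fun z => (this z (Set.mem_univ z)).continuousAt
  refine ⟨fun z => ∫ t in (0:ℝ)..1, z * g ((t:ℂ) * z), fun z₀ => ?_⟩
  set R : ℝ := ‖z₀‖ + 1 with hR
  obtain ⟨C₁, hC₁⟩ := (isCompact_closedBall (0:ℂ) R).exists_bound_of_continuousOn hgc.continuousOn
  obtain ⟨C₂, hC₂⟩ := (isCompact_closedBall (0:ℂ) R).exists_bound_of_continuousOn hg'.continuousOn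
  have hC₁0 : 0 ≤ C₁ := le_trans (norm_nonneg _) (hC₁ 0 (by simp [hR]; positivity))
  have hC₂0 : 0 ≤ C₂ := le_trans (norm_nonneg _) (hC₂ 0 (by simp [hR]; positivity))
  have hmem : ∀ t : ℝ, t ∈ Set.uIoc (0:ℝ) 1 → ∀ x ∈ ball z₀ 1, (t:ℂ) * x ∈ closedBall (0:ℂ) R := by
    intro t ht x hx
    have ht' : t ∈ Set.Ioc (0:ℝ) 1 := by rwa [Set.uIoc_of_le (by norm_num)] at ht
    have hxn : ‖x‖ ≤ R := by
      have := mem_ball_iff_norm.1 hx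
      calc ‖x‖ = ‖z₀ + (x - z₀)‖ := by ring_nf
        _ ≤ ‖z₀‖ + ‖x - z₀‖ := norm_add_le _ _
        _ ≤ ‖z₀‖ + 1 := by nlinarith [norm_sub_rev x z₀ ▸ this.le]
    simp only [mem_closedBall, dist_zero_right, norm_mul, Complex.norm_real,
      Real.norm_eq_abs, abs_of_pos ht'.1]
    nlinarith [ht'.2, norm_nonneg x, ht'.1.le]
  have key := intervalIntegral.hasDerivAt_integral_of_dominated_loc_of_deriv_le
    (F := fun (x : ℂ) (t : ℝ) => x * g ((t:ℂ) * x))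
    (F' := fun (x : ℂ) (t : ℝ) => g ((t:ℂ) * x) + (t:ℂ) * x * deriv g ((t:ℂ) * x))
    (x₀ := z₀) (μ := MeasureTheory.volume) (a := (0:ℝ)) (b := 1) (bound := fun _ => C₁ + R * C₂) (s := ball z₀ 1) (ball_mem_nhds z₀ one_pos)
    ?_ ?_ ?_ ?_ ?_ ?_
  · have hint : (∫ t in (0:ℝ)..1, (g ((t:ℂ) * z₀) + (t:ℂ) * z₀ * deriv g ((t:ℂ) * z₀)))
        = g z₀ := by
      have hd : ∀ t ∈ Set.uIcc (0:ℝ) 1, HasDerivAt (fun s : ℝ => (s:ℂ) * g ((s:ℂ) * z₀))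
          (g ((t:ℂ) * z₀) + (t:ℂ) * z₀ * deriv g ((t:ℂ) * z₀)) t := by
        intro t _
        have h1 : HasDerivAt (fun s : ℝ => (s:ℂ)) 1 t := by
          simpa using (hasDerivAt_id t).ofReal_comp
        have h2c : HasDerivAt (fun w : ℂ => g (w * z₀)) (deriv g ((t:ℂ) * z₀) * z₀) ((t:ℂ)) := by
          have := ((hg ((t:ℂ) * z₀)).hasDerivAt).comp ((t:ℂ))
            ((hasDerivAt_id ((t:ℂ))).mul_const z₀)
          simpa [Function.comp_def] using this
        have h2 : HasDerivAt (fun s : ℝ => g ((s:ℂ) * z₀)) (deriv g ((t:ℂ) * z₀) * z₀) t :=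
          h2c.comp_ofReal
        have := h1.mul h2
        convert this using 1
        · rfl
        · rfl
        · ring
      have hcont : IntervalIntegrable
          (fun t : ℝ => g ((t:ℂ) * z₀) + (t:ℂ) * z₀ * deriv g ((t:ℂ) * z₀)) MeasureTheory.volume 0 1 := by
        exact ((hgc.comp ((Complex.continuous_ofReal).mul continuous_const)).add
          (((Complex.continuous_ofReal).mul continuous_const).mul
            (hg'.comp ((Complex.continuous_ofReal).mul continuous_const)))).intervalIntegrable _ _
      have := intervalIntegral.integral_eq_sub_of_hasDerivAt hd hcont
      simpa using this
    rw [hint] at key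
    exact key.2
  · filter_upwards with x
    exact (continuous_const.mul
      (hgc.comp ((Complex.continuous_ofReal).mul continuous_const))).aestronglyMeasurable
  · exact ((continuous_const.mul
      (hgc.comp ((Complex.continuous_ofReal).mul continuous_const))).intervalIntegrable _ _)
  · exact ((hgc.comp ((Complex.continuous_ofReal).mul continuous_const)).add
      (((Complex.continuous_ofReal).mul continuous_const).mul
        (hg'.comp ((Complex.continuous_ofReal).mul continuous_const)))).aestronglyMeasurable
  · filter_upwards with t
    intro ht x hx
    have hm := hmem t ht x hx
    have h1 : ‖g ((t:ℂ) * x)‖ ≤ C₁ := hC₁ _ hm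
    have h2 : ‖deriv g ((t:ℂ) * x)‖ ≤ C₂ := hC₂ _ hm
    have h3 : ‖(t:ℂ) * x‖ ≤ R := by simpa [mem_closedBall, dist_zero_right] using hm
    calc ‖g ((t:ℂ) * x) + (t:ℂ) * x * deriv g ((t:ℂ) * x)‖
        ≤ ‖g ((t:ℂ) * x)‖ + ‖(t:ℂ) * x * deriv g ((t:ℂ) * x)‖ := norm_add_le _ _
      _ ≤ C₁ + R * C₂ := by
          rw [norm_mul]
          have : ‖(t:ℂ) * x‖ * ‖deriv g ((t:ℂ) * x)‖ ≤ R * C₂ :=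
            mul_le_mul h3 h2 (norm_nonneg _) (by positivity)
          linarith
  · exact intervalIntegrable_const
  · filter_upwards with t
    intro ht x hx
    have h0 : HasDerivAt (fun y : ℂ => (t:ℂ) * y) ((t:ℂ)) x := by
      simpa using (hasDerivAt_id x).const_mul ((t:ℂ))
    have hgd : HasDerivAt (fun y : ℂ => g ((t:ℂ) * y)) (deriv g ((t:ℂ) * x) * (t:ℂ)) x :=
      ((hg ((t:ℂ) * x)).hasDerivAt).comp x h0
    have := (hasDerivAt_id x).mul hgd
    convert this using 1
    · rfl
    · rfl
    · simp only [id_eq]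
      ring


lemma clm_ext_c {α : Type*} [NormedAddCommGroup α] [NormedSpace ℝ α] {L₁ L₂ : ℂ →L[ℝ] α}
    (h1 : L₁ 1 = L₂ 1) (hI : L₁ Complex.I = L₂ Complex.I) : L₁ = L₂ := by
  ext w
  have hw : (w.re : ℝ) • (1:ℂ) + (w.im : ℝ) • Complex.I = w := by
    simp [Complex.real_smul, Complex.re_add_im]
  calc L₁ w = L₁ ((w.re : ℝ) • (1:ℂ) + (w.im : ℝ) • Complex.I) := by rw [hw]
    _ = L₂ ((w.re : ℝ) • (1:ℂ) + (w.im : ℝ) • Complex.I) := by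
        simp only [map_add, map_smul, h1, hI]
    _ = L₂ w := by rw [hw]

lemma hasDerivAt_of_CR {g : ℂ → ℂ} {L : ℂ →L[ℝ] ℂ} {z : ℂ}
    (h : HasFDerivAt g L z) (hCR : L Complex.I = Complex.I * L 1) :
    HasDerivAt g (L 1) z := by
  have hM : ((ContinuousLinearMap.smulRight (1 : ℂ →L[ℂ] ℂ) (L 1)).restrictScalars ℝ) = L := by
    apply clm_ext_c
    · simp
    · simp [hCR, mul_comm]
  have := hasFDerivAt_of_restrictScalars ℝ h hM
  rwa [hasDerivAt_iff_hasFDerivAt]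

lemma phi_deriv_vanish {E : Type*} [NormedAddCommGroup E] [NormedSpace ℝ E]
    {f : ℂ → E} (hf : ContDiff ℝ 2 f)
    (hharm : ∀ z : ℂ, fderiv ℝ (fun w => fderiv ℝ f w 1) z 1
      + fderiv ℝ (fun w => fderiv ℝ f w Complex.I) z Complex.I = 0)
    (hprim : ∀ g : ℂ → ℂ, Differentiable ℂ g → ∃ G : ℂ → ℂ, ∀ z, HasDerivAt G (g z) z)
    (φ : E →L[ℝ] ℝ) {c : ℝ} (hb : ∀ z, φ (f z) ≤ c) (z : ℂ) :
    φ (fderiv ℝ f z 1) = 0 ∧ φ (fderiv ℝ f z Complex.I) = 0 := by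
  have hdiff : Differentiable ℝ f := hf.differentiable (by norm_num)
  have hFd : ∀ w : ℂ, HasFDerivAt f (fderiv ℝ f w) w := fun w => (hdiff w).hasFDerivAt
  have hF1 : ContDiff ℝ 1 (fderiv ℝ f) := hf.fderiv_right (by norm_num)
  have hF'd : ∀ w : ℂ, HasFDerivAt (fderiv ℝ f) (fderiv ℝ (fderiv ℝ f) w) w :=
    fun w => ((hF1.differentiable (by norm_num)) w).hasFDerivAt
  set F : ℂ → ℂ →L[ℝ] E := fderiv ℝ f with hF
  set F' : ℂ → ℂ →L[ℝ] ℂ →L[ℝ] E := fderiv ℝ F with hF'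
  have hsymm : ∀ (w v u : ℂ), F' w v u = F' w u v :=
    fun w => second_derivative_symmetric hFd (hF'd w)
  have heval : ∀ (v w : ℂ), HasFDerivAt (fun y => F y v)
      ((ContinuousLinearMap.apply ℝ E v).comp (F' w)) w :=
    fun v w => (ContinuousLinearMap.apply ℝ E v).hasFDerivAt.comp w (hF'd w)
  have hh : ∀ w : ℂ, F' w 1 1 + F' w Complex.I Complex.I = 0 := by
    intro w
    have h1 := (heval 1 w).fderiv
    have h2 := (heval Complex.I w).fderiv
    have h3 := hharm w
    rw [h1, h2] at h3
    simpa using h3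
  set a : ℂ → ℝ := fun w => φ (F w 1) with ha
  set b : ℂ → ℝ := fun w => φ (F w Complex.I) with hbdef
  set g : ℂ → ℂ := fun w => ((a w : ℝ) : ℂ) - (b w) • Complex.I with hg
  have hA : ∀ w : ℂ, HasFDerivAt a
      ((φ.comp (ContinuousLinearMap.apply ℝ E 1)).comp (F' w)) w := by
    intro w
    have := (φ.comp (ContinuousLinearMap.apply ℝ E (1:ℂ))).hasFDerivAt.comp w (hF'd w)
    simpa [ha, Function.comp_def] using this
  have hB : ∀ w : ℂ, HasFDerivAt b
      ((φ.comp (ContinuousLinearMap.apply ℝ E Complex.I)).comp (F' w)) w := by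
    intro w
    have := (φ.comp (ContinuousLinearMap.apply ℝ E (Complex.I))).hasFDerivAt.comp w (hF'd w)
    simpa [hbdef, Function.comp_def] using this
  have hgder : ∀ w : ℂ, ∃ m : ℂ, HasDerivAt g m w := by
    intro w
    have h1 : HasFDerivAt (fun y => ((a y : ℝ) : ℂ))
        (Complex.ofRealCLM.comp ((φ.comp (ContinuousLinearMap.apply ℝ E 1)).comp (F' w))) w :=
      Complex.ofRealCLM.hasFDerivAt.comp w (hA w)
    have h2 : HasFDerivAt (fun y => (b y) • Complex.I)
        (((φ.comp (ContinuousLinearMap.apply ℝ E Complex.I)).comp (F' w)).smulRight Complex.I)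
        w := (hB w).smul_const Complex.I
    have hL := h1.sub h2
    refine ⟨_, hasDerivAt_of_CR hL ?_⟩
    have hsy : φ (F' w Complex.I 1) = φ (F' w 1 Complex.I) := by rw [hsymm w Complex.I 1]
    have hha : φ (F' w 1 1) + φ (F' w Complex.I Complex.I) = 0 := by
      rw [← map_add, hh w, map_zero]
    simp only [ContinuousLinearMap.sub_apply, ContinuousLinearMap.comp_apply,
      ContinuousLinearMap.smulRight_apply, ContinuousLinearMap.apply_apply,
      Complex.ofRealCLM_apply, Complex.real_smul]
    rw [hsy]
    rw [Complex.ext_iff]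
    constructor <;> simp <;> linarith
  choose m hm using hgder
  have hgdiff : Differentiable ℂ g := fun w => (hm w).differentiableAt
  obtain ⟨G, hG⟩ := hprim g hgdiff
  set r : ℂ → ℝ := fun w => (G w).re - φ (f w) with hr
  have hr0 : ∀ w : ℂ, HasFDerivAt r (0 : ℂ →L[ℝ] ℝ) w := by
    intro w
    have hGF : HasFDerivAt G
        ((ContinuousLinearMap.smulRight (1 : ℂ →L[ℂ] ℂ) (g w)).restrictScalars ℝ) w :=
      ((hG w).hasFDerivAt).restrictScalars ℝ
    have h1 : HasFDerivAt (fun y => (G y).re)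
        (Complex.reCLM.comp
          ((ContinuousLinearMap.smulRight (1 : ℂ →L[ℂ] ℂ) (g w)).restrictScalars ℝ)) w :=
      Complex.reCLM.hasFDerivAt.comp w hGF
    have h2 : HasFDerivAt (fun y => φ (f y)) (φ.comp (F w)) w :=
      φ.hasFDerivAt.comp w (hFd w)
    have h3 := h1.sub h2
    have hz : (Complex.reCLM.comp
          ((ContinuousLinearMap.smulRight (1 : ℂ →L[ℂ] ℂ) (g w)).restrictScalars ℝ)
        - φ.comp (F w)) = 0 := by
      apply clm_ext_c <;>
        simp [hg, Complex.real_smul, Complex.ext_iff, smul_eq_mul, ha, hbdef]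
    rwa [hz] at h3
  have hrconst : ∀ w : ℂ, r w = r 0 :=
    fun w => is_const_of_fderiv_eq_zero (fun y => (hr0 y).differentiableAt)
      (fun y => (hr0 y).fderiv) w 0
  have hGre : ∀ w : ℂ, (G w).re ≤ r 0 + c := by
    intro w
    have : (G w).re = r w + φ (f w) := by simp [hr]
    rw [this, hrconst w]
    linarith [hb w]
  have hEd : Differentiable ℂ (fun w => Complex.exp (G w)) :=
    fun w => ((hG w).cexp).differentiableAt
  have hEb : Bornology.IsBounded (Set.range fun w => Complex.exp (G w)) := by
    rw [isBounded_iff_forall_norm_le]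
    refine ⟨Real.exp (r 0 + c), ?_⟩
    rintro x ⟨w, rfl⟩
    rw [Complex.norm_exp]
    exact Real.exp_le_exp.2 (hGre w)
  have hEc := hEd.apply_eq_apply_of_bounded hEb
  have hfun : (fun w => Complex.exp (G w)) = fun _ => Complex.exp (G 0) :=
    funext fun w => hEc w 0
  have hgz : g z = 0 := by
    have h0 : HasDerivAt (fun w => Complex.exp (G w)) 0 z := by
      rw [hfun]; exact hasDerivAt_const _ _
    have h1 : HasDerivAt (fun w => Complex.exp (G w)) (Complex.exp (G z) * g z) z :=
      (hG z).cexp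
    have := h1.unique h0
    rcases mul_eq_zero.1 this with h | h
    · exact absurd h (Complex.exp_ne_zero _)
    · exact h
  have hab : a z = 0 ∧ b z = 0 := by
    have h := hgz
    rw [hg] at h
    simp only [] at h
    have hre := congrArg Complex.re h
    have him := congrArg Complex.im h
    simp [Complex.real_smul] at hre him
    exact ⟨hre, him⟩
  exact hab

end AuxLemmas

/-- Let `n ≥ 3` and let `Ω ⊆ ℝⁿ` be a convex domain. Then every
conformal harmonic map `ℂ → Ω` is constant if and only if `Ω` contains no affine
`2`-plane `p + span{u,v}` with `u, v` linearly independent. -/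
theorem convex_weakly_hyperbolic_iff_no_affine_two_plane {n : ℕ} (hn : 3 ≤ n)
    (Ω : Set (EuclideanSpace ℝ (Fin n))) (hne : Ω.Nonempty) (hopen : IsOpen Ω)
    (hconv : Convex ℝ Ω) :
    (∀ f : ℂ → EuclideanSpace ℝ (Fin n), ConformalHarmonic f →
        (∀ z : ℂ, f z ∈ Ω) → ∀ z w : ℂ, f z = f w) ↔
      ¬ ∃ (p u v : EuclideanSpace ℝ (Fin n)), LinearIndependent ℝ ![u, v] ∧
          ∀ s t : ℝ, p + s • u + t • v ∈ Ω := by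
  constructor
  · -- every CH map is constant → no affine 2-plane
    intro hconst
    rintro ⟨p, u, v, hind, hmem⟩
    have hpair := LinearIndependent.pair_iff.1 hind
    have hu : u ≠ 0 := by
      intro h
      have := (hpair 1 0 (by simp [h])).1
      norm_num at this
    have hw0 : v - (⟪u, v⟫ / ⟪u, u⟫) • u ≠ 0 := by
      intro h
      have : (-(⟪u, v⟫ / ⟪u, u⟫)) • u + (1:ℝ) • v = 0 := by
        rw [← h]; module
      have := (hpair _ _ this).2
      norm_num at this
    set d : ℝ := ⟪u, v⟫ / ⟪u, u⟫ with hd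
    set w : EuclideanSpace ℝ (Fin n) := v - d • u with hwdef
    have huu : ⟪u, u⟫ ≠ 0 := inner_self_ne_zero.2 hu
    have horthw : ⟪u, w⟫ = 0 := by
      rw [hwdef, inner_sub_right, real_inner_smul_right, hd,
        div_mul_cancel₀ _ huu, sub_self]
    set c : ℝ := ‖u‖ / ‖w‖ with hc
    set e₂ : EuclideanSpace ℝ (Fin n) := c • w with he₂
    have hwn : ‖w‖ ≠ 0 := norm_ne_zero_iff.2 hw0
    have horth : ⟪u, e₂⟫ = 0 := by
      rw [he₂, real_inner_smul_right, horthw, mul_zero]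
    have hnorm : ‖e₂‖ = ‖u‖ := by
      rw [he₂, norm_smul, hc, Real.norm_eq_abs, abs_div, abs_norm, abs_norm]
      field_simp
    set L : ℂ →L[ℝ] EuclideanSpace ℝ (Fin n) :=
      (Complex.reCLM.smulRight u) + (Complex.imCLM.smulRight e₂) with hL
    set f : ℂ → EuclideanSpace ℝ (Fin n) := fun z => p + L z with hf
    have hfd : ∀ z : ℂ, HasFDerivAt f L z := fun z => L.hasFDerivAt.const_add p
    have hfback : ∀ z : ℂ, fderiv ℝ f z = L := fun z => (hfd z).fderiv
    have hL1 : L 1 = u := by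
      simp [hL, ContinuousLinearMap.smulRight_apply]
    have hLI : L Complex.I = e₂ := by
      simp [hL, ContinuousLinearMap.smulRight_apply]
    have hCH : ConformalHarmonic f := by
      refine ⟨contDiff_const.add L.contDiff, fun z => ?_, fun z => ?_⟩
      · rw [hfback z, hL1, hLI]
        exact ⟨horth, hnorm.symm⟩
      · simp only [hfback]
        simp
    have hmemf : ∀ z : ℂ, f z ∈ Ω := by
      intro z
      have : f z = p + (z.re - z.im * c * d) • u + (z.im * c) • v := by
        rw [hf]
        simp only [hL, ContinuousLinearMap.add_apply, ContinuousLinearMap.smulRight_apply,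
          Complex.reCLM_apply, Complex.imCLM_apply, he₂, hwdef]
        module
      rw [this]
      exact hmem _ _
    have h01 : p + L 0 = p + L 1 := hconst f hCH hmemf 0 1
    rw [map_zero, hL1, add_zero] at h01
    exact hu (by simpa using h01.symm)
  · -- no affine 2-plane → every CH map is constant
    intro hplane f hCH hmemf z w
    by_contra hne
    have hdiff : Differentiable ℝ f := hCH.1.differentiable (by norm_num)
    have hex : ∃ z₁ : ℂ, fderiv ℝ f z₁ ≠ 0 := by
      by_contra h
      push_neg at h
      exact hne (is_const_of_fderiv_eq_zero hdiff h z w)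
    obtain ⟨z₁, hz₁⟩ := hex
    set u := fderiv ℝ f z₁ 1 with hudef
    set v := fderiv ℝ f z₁ Complex.I with hvdef
    have horth : ⟪u, v⟫ = 0 := (hCH.2.1 z₁).1
    have hnorm : ‖u‖ = ‖v‖ := (hCH.2.1 z₁).2
    have hu : u ≠ 0 := by
      intro h
      apply hz₁
      have hv : v = 0 := by
        rw [← norm_eq_zero, ← hnorm, h, norm_zero]
      apply clm_ext_c
      · simp [← hudef, h]
      · simp [← hvdef, hv]
    have hv : v ≠ 0 := by
      intro h
      apply hu
      rw [← norm_eq_zero, hnorm, h, norm_zero]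
    have hkill : ∀ (φ : EuclideanSpace ℝ (Fin n) →L[ℝ] ℝ) (cc : ℝ),
        (∀ x ∈ Ω, φ x ≤ cc) → φ u = 0 ∧ φ v = 0 := by
      intro φ cc hφ
      exact phi_deriv_vanish hCH.1 hCH.2.2 (fun g hg => exists_primitive hg) φ
        (fun z' => hφ _ (hmemf z')) z₁
    set p := f z₁ with hp
    have hcl : ∀ s t : ℝ, p + s • u + t • v ∈ closure Ω := by
      intro s t
      by_contra hout
      obtain ⟨φ, cc, hφ1, hφ2⟩ :=
        geometric_hahn_banach_closed_point hconv.closure isClosed_closure hout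
      have hb : ∀ x ∈ Ω, φ x ≤ cc := fun x hx => (hφ1 x (subset_closure hx)).le
      obtain ⟨hu0, hv0⟩ := hkill φ cc hb
      have heq : φ (p + s • u + t • v) = φ p := by
        simp [map_add, map_smul, hu0, hv0]
      have hple : φ p < cc := hφ1 p (subset_closure (hmemf z₁))
      rw [heq] at hφ2
      linarith
    have hΩ : ∀ s t : ℝ, p + s • u + t • v ∈ Ω := by
      intro s t
      have h2 : p + (2 * s) • u + (2 * t) • v ∈ closure Ω := hcl _ _
      have hpint : p ∈ interior Ω := by
        rw [hopen.interior_eq]; exact hmemf z₁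
      have hcomb := hconv.combo_interior_closure_mem_interior hpint h2
        (by norm_num : (0:ℝ) < 1/2) (by norm_num : (0:ℝ) ≤ 1/2) (by norm_num)
      rw [hopen.interior_eq] at hcomb
      have halg : (1/2 : ℝ) • p + (1/2 : ℝ) • (p + (2 * s) • u + (2 * t) • v)
          = p + s • u + t • v := by module
      rwa [halg] at hcomb
    have hind : LinearIndependent ℝ ![u, v] := by
      rw [LinearIndependent.pair_iff]
      intro s t hst
      have h1 : ⟪u, s • u + t • v⟫ = 0 := by rw [hst, inner_zero_right]
      have h2 : ⟪v, s • u + t • v⟫ = 0 := by rw [hst, inner_zero_right]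
      rw [inner_add_right, real_inner_smul_right, real_inner_smul_right, horth] at h1
      rw [inner_add_right, real_inner_smul_right, real_inner_smul_right,
        real_inner_comm u v, horth] at h2
      have huu : ⟪u, u⟫ ≠ 0 := inner_self_ne_zero.2 hu
      have hvv : ⟪v, v⟫ ≠ 0 := inner_self_ne_zero.2 hv
      constructor
      · have : s * ⟪u, u⟫ = 0 := by linarith
        exact (mul_eq_zero.1 this).resolve_right huu
      · have : t * ⟪v, v⟫ = 0 := by linarith
        exact (mul_eq_zero.1 this).resolve_right hvv
    exact hplane ⟨p, u, v, hind, hΩ⟩
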